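/- Let v' be the SK-valuation with v'(p) = 1/2 for every propositional variable p. Then for every formula φ: (i) if there exists an SK-valuation v with v(φ) ≠ 0, then v'(φ) ≠ 0; and (ii) if there exists an SK-valuation v with v(φ) ≠ 1, then v'(φ) ≠ 1. -/
import Mathlib


/-- Propositional formulas over a countably infinite set of variables,
with constants ⊤, ⊥, λ and connectives ¬, ∨, ∧. -/
inductive Fm : Type
  | var : ℕ → Fm
  | top : Fm
  | bot : Fm
  | lam : Fm
  | neg : Fm → Fm
  | disj : Fm → Fm → Fm
  | conj : Fm → Fm → Fm
  deriving DecidableEq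

/-- A function `v : Var → ℚ` is an SK-valuation if it takes values in {0, 1/2, 1}. -/
def SK (v : ℕ → ℚ) : Prop := ∀ p : ℕ, v p = 0 ∨ v p = 1/2 ∨ v p = 1

/-- Extension of a valuation to all formulas by the Strong Kleene scheme. -/
def eval (v : ℕ → ℚ) : Fm → ℚ
  | .var p => v p
  | .top => 1
  | .bot => 0
  | .lam => 1/2
  | .neg φ => 1 - eval v φ
  | .disj φ ψ => max (eval v φ) (eval v ψ)
  | .conj φ ψ => min (eval v φ) (eval v ψ)

/-- An inference is a pair of finite sets of formulas. -/
abbrev Inference := Finset Fm × Finset Fm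

def K3Valid (Γ Δ : Finset Fm) : Prop :=
  ∀ v : ℕ → ℚ, SK v → (∀ γ ∈ Γ, eval v γ = 1) → ∃ δ ∈ Δ, eval v δ = 1

def LPValid (Γ Δ : Finset Fm) : Prop :=
  ∀ v : ℕ → ℚ, SK v → (∀ γ ∈ Γ, eval v γ ≠ 0) → ∃ δ ∈ Δ, eval v δ ≠ 0

def STValid (Γ Δ : Finset Fm) : Prop :=
  ∀ v : ℕ → ℚ, SK v → (∀ γ ∈ Γ, eval v γ = 1) → ∃ δ ∈ Δ, eval v δ ≠ 0

def TSValid (Γ Δ : Finset Fm) : Prop :=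
  ∀ v : ℕ → ℚ, SK v → (∀ γ ∈ Γ, eval v γ ≠ 0) → ∃ δ ∈ Δ, eval v δ = 1

def K3plus : Set Inference := {I | K3Valid I.1 I.2}
def LPplus : Set Inference := {I | LPValid I.1 I.2}
def STplus : Set Inference := {I | STValid I.1 I.2}
def TSplus : Set Inference := {I | TSValid I.1 I.2}

/-- Relative product: the middle term is a single formula. -/
def RelProd (R S : Set Inference) : Set Inference :=
  {I | ∃ φ : Fm, (I.1, ({φ} : Finset Fm)) ∈ R ∧ (({φ} : Finset Fm), I.2) ∈ S}

/-- Relative sum: for every single formula, one of the two components holds. -/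
def RelSum (R S : Set Inference) : Set Inference :=
  {I | ∀ φ : Fm, (I.1, ({φ} : Finset Fm)) ∈ R ∨ (({φ} : Finset Fm), I.2) ∈ S}


lemma eval_bounds (v : ℕ → ℚ) (hv : SK v) (φ : Fm) :
    0 ≤ eval v φ ∧ eval v φ ≤ 1 := by
  induction φ with
  | var p => rcases hv p with h | h | h <;> simp [eval, h] <;> norm_num
  | top => simp [eval]
  | bot => simp [eval]
  | lam => norm_num [eval]
  | neg φ ih => simp [eval]; constructor <;> linarith [ih.1, ih.2]
  | disj φ ψ ih1 ih2 =>
      exact ⟨le_max_of_le_left ih1.1, max_le ih1.2 ih2.2⟩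
  | conj φ ψ ih1 ih2 =>
      exact ⟨le_min ih1.1 ih2.1, min_le_of_left_le ih1.2⟩

lemma half_key (v : ℕ → ℚ) (hv : SK v) (φ : Fm) :
    (eval (fun _ => 1/2) φ = 0 → eval v φ = 0) ∧
    (eval (fun _ => 1/2) φ = 1 → eval v φ = 1) := by
  induction φ with
  | var p =>
      constructor <;> intro h <;> norm_num [eval] at h
  | top => simp [eval]
  | bot => simp [eval]
  | lam => constructor <;> intro h <;> norm_num [eval] at h
  | neg φ ih =>
      simp only [eval]
      constructor <;> intro h
      · have := ih.2 (by linarith); linarith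
      · have := ih.1 (by linarith); linarith
  | disj φ ψ ih1 ih2 =>
      simp only [eval]
      obtain ⟨g1a, g1b⟩ := eval_bounds (fun _ => (1:ℚ)/2) (by intro p; norm_num) φ
      obtain ⟨g2a, g2b⟩ := eval_bounds (fun _ => (1:ℚ)/2) (by intro p; norm_num) ψ
      obtain ⟨h1a, h1b⟩ := eval_bounds v hv φ
      obtain ⟨h2a, h2b⟩ := eval_bounds v hv ψ
      constructor <;> intro h
      · have l1 := le_max_left (eval (fun _ => (1:ℚ)/2) φ) (eval (fun _ => (1:ℚ)/2) ψ)
        have l2 := le_max_right (eval (fun _ => (1:ℚ)/2) φ) (eval (fun _ => (1:ℚ)/2) ψ)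
        rw [h] at l1 l2
        rw [ih1.1 (le_antisymm l1 g1a), ih2.1 (le_antisymm l2 g2a)]; simp
      · rcases max_cases (eval (fun _ => 1/2) φ) (eval (fun _ => 1/2) ψ) with ⟨he, _⟩ | ⟨he, _⟩
        · have := ih1.2 (he ▸ h)
          rw [max_eq_iff]; exact Or.inl ⟨this, by linarith⟩
        · have := ih2.2 (he ▸ h)
          rw [max_eq_iff]; exact Or.inr ⟨this, by linarith⟩
  | conj φ ψ ih1 ih2 =>
      simp only [eval]
      obtain ⟨g1a, g1b⟩ := eval_bounds (fun _ => (1:ℚ)/2) (by intro p; norm_num) φ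
      obtain ⟨g2a, g2b⟩ := eval_bounds (fun _ => (1:ℚ)/2) (by intro p; norm_num) ψ
      obtain ⟨h1a, h1b⟩ := eval_bounds v hv φ
      obtain ⟨h2a, h2b⟩ := eval_bounds v hv ψ
      constructor <;> intro h
      · rcases min_cases (eval (fun _ => 1/2) φ) (eval (fun _ => 1/2) ψ) with ⟨he, _⟩ | ⟨he, _⟩
        · have := ih1.1 (he ▸ h)
          rw [min_eq_iff]; exact Or.inl ⟨this, by linarith⟩
        · have := ih2.1 (he ▸ h)
          rw [min_eq_iff]; exact Or.inr ⟨this, by linarith⟩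
      · have l1 := min_le_left (eval (fun _ => (1:ℚ)/2) φ) (eval (fun _ => (1:ℚ)/2) ψ)
        have l2 := min_le_right (eval (fun _ => (1:ℚ)/2) φ) (eval (fun _ => (1:ℚ)/2) ψ)
        rw [h] at l1 l2
        rw [ih1.2 (le_antisymm g1b l1), ih2.2 (le_antisymm g2b l2)]; simp

theorem half_valuation_extremal (φ : Fm) :
    ((∃ v : ℕ → ℚ, SK v ∧ eval v φ ≠ 0) → eval (fun _ => 1/2) φ ≠ 0) ∧
    ((∃ v : ℕ → ℚ, SK v ∧ eval v φ ≠ 1) → eval (fun _ => 1/2) φ ≠ 1) := by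
  constructor
  · rintro ⟨v, hv, h⟩ h0
    exact h ((half_key v hv φ).1 h0)
  · rintro ⟨v, hv, h⟩ h1
    exact h ((half_key v hv φ).2 h1)
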